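/- Fix an integer k ≥ 1 and define ε(1)_q = −1 if 0 ≤ q < k and ε(1)_q = +1 if k ≤ q < 2k, and λ(1,1)_m = (3/(2k³)) Σ_{q=0}^{2k−m−1} ε(1)_q ε(1)_{q+m} for 0 ≤ m ≤ 2k−1. Then for every k ≥ 1, k³ · Σ_{m=1}^{2k−1} (λ(1,1)_m)² = 3 − 9/(2k) + 15/(4k²). In particular, k³ · Σ_{m=1}^{2k−1} (λ(1,1)_m)² → 3 as k → ∞. -/
import Mathlib


open Filter

/-- The weight sequence `ε(1)_q`: equal to `−1` for `0 ≤ q < k` and `+1` for `k ≤ q < 2k`. -/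
noncomputable def eps1 (k q : ℕ) : ℝ := if q < k then -1 else 1

/-- The weight `λ(1,1)_m = (3/(2k³)) Σ_{q=0}^{2k−m−1} ε(1)_q ε(1)_{q+m}`. -/
noncomputable def lam11 (k m : ℕ) : ℝ :=
  (3 / (2 * (k : ℝ) ^ 3)) * ∑ q ∈ Finset.range (2 * k - m), eps1 k q * eps1 k (q + m)

lemma sq_sum (A B : ℝ) (n : ℕ) :
    ∑ q ∈ Finset.range n, (A + B * q) ^ 2
      = (n : ℝ) * A ^ 2 + A * B * ((n : ℝ) * ((n : ℝ) - 1))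
        + B ^ 2 * ((n : ℝ) * ((n : ℝ) - 1) * (2 * (n : ℝ) - 1) / 6) := by
  induction n with
  | zero => simp
  | succ n ih =>
    rw [Finset.sum_range_succ, ih]
    push_cast
    ring

lemma S_low (k m : ℕ) (hm1 : 1 ≤ m) (hmk : m ≤ k) :
    ∑ q ∈ Finset.range (2 * k - m), eps1 k q * eps1 k (q + m)
      = 2 * (k : ℝ) - 3 * (m : ℝ) := by
  have h2 : k - m ≤ k := Nat.sub_le _ _
  have h3 : k ≤ 2 * k - m := by omega
  rw [Finset.range_eq_Ico,
    ← Finset.sum_Ico_consecutive _ (Nat.zero_le k) h3,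
    ← Finset.sum_Ico_consecutive _ (Nat.zero_le (k - m)) h2]
  have A : ∑ q ∈ Finset.Ico 0 (k - m), eps1 k q * eps1 k (q + m) = ((k - m : ℕ) : ℝ) := by
    rw [Finset.sum_congr rfl (g := fun _ => (1:ℝ)) fun q hq => ?_]
    · simp [Nat.card_Ico]
    · simp only [Finset.mem_Ico] at hq
      simp [eps1, show q < k by omega, show q + m < k by omega]
  have B : ∑ q ∈ Finset.Ico (k - m) k, eps1 k q * eps1 k (q + m) = -((m : ℕ) : ℝ) := by
    rw [Finset.sum_congr rfl (g := fun _ => (-1:ℝ)) fun q hq => ?_]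
    · have hcard : k - (k - m) = m := by omega
      simp [Nat.card_Ico, hcard]
    · simp only [Finset.mem_Ico] at hq
      simp [eps1, show q < k by omega, show ¬ (q + m < k) by omega]
  have C : ∑ q ∈ Finset.Ico k (2 * k - m), eps1 k q * eps1 k (q + m) = ((k - m : ℕ) : ℝ) := by
    rw [Finset.sum_congr rfl (g := fun _ => (1:ℝ)) fun q hq => ?_]
    · have hcard : 2 * k - m - k = k - m := by omega
      simp [Nat.card_Ico, hcard]
    · simp only [Finset.mem_Ico] at hq
      simp [eps1, show ¬ (q < k) by omega, show ¬ (q + m < k) by omega]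
  rw [A, B, C, Nat.cast_sub hmk]
  ring

lemma S_high (k m : ℕ) (hkm : k < m) :
    ∑ q ∈ Finset.range (2 * k - m), eps1 k q * eps1 k (q + m)
      = -(((2 * k - m : ℕ)) : ℝ) := by
  rw [Finset.sum_congr rfl (g := fun _ => (-1:ℝ)) fun q hq => ?_]
  · simp
  · simp only [Finset.mem_range] at hq
    simp [eps1, show q < k by omega, show ¬ (q + m < k) by omega]

lemma exact_part (k : ℕ) (hk : 1 ≤ k) :
    (k : ℝ) ^ 3 * ∑ m ∈ Finset.Icc 1 (2 * k - 1), (lam11 k m) ^ 2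
      = 3 - 9 / (2 * (k : ℝ)) + 15 / (4 * (k : ℝ) ^ 2) := by
  have hk0 : (k : ℝ) ≠ 0 := Nat.cast_ne_zero.mpr (by omega)
  have hIcc : Finset.Icc 1 (2 * k - 1) = Finset.Ico 1 (2 * k) := by
    rw [← Finset.Ico_add_one_right_eq_Icc]
    congr 1
    omega
  rw [hIcc, ← Finset.sum_Ico_consecutive (fun m => (lam11 k m) ^ 2)
        (show 1 ≤ k + 1 by omega) (show k + 1 ≤ 2 * k by omega)]
  have c2 : ∀ x : ℝ, (3 / (2 * (k : ℝ) ^ 3) * x) ^ 2 = (9 / (4 * (k:ℝ)^6)) * x ^ 2 := by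
    intro x
    field_simp
    ring
  have e1 : ∑ m ∈ Finset.Ico 1 (k + 1), lam11 k m ^ 2
      = (9 / (4 * (k:ℝ)^6)) * ∑ q ∈ Finset.range k, ((2 * (k:ℝ) - 3) + (-3) * q) ^ 2 := by
    rw [Finset.mul_sum, Finset.sum_Ico_eq_sum_range]
    simp only [Nat.add_sub_cancel]
    refine Finset.sum_congr rfl fun q hq => ?_
    simp only [Finset.mem_range] at hq
    rw [lam11, S_low k (1 + q) (by omega) (by omega), c2]
    push_cast
    ring
  have e2 : ∑ m ∈ Finset.Ico (k + 1) (2 * k), lam11 k m ^ 2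
      = (9 / (4 * (k:ℝ)^6)) * ∑ q ∈ Finset.range (k - 1), (((k:ℝ) - 1) + (-1) * q) ^ 2 := by
    rw [Finset.mul_sum, Finset.sum_Ico_eq_sum_range]
    have hn : 2 * k - (k + 1) = k - 1 := by omega
    rw [hn]
    refine Finset.sum_congr rfl fun q hq => ?_
    simp only [Finset.mem_range] at hq
    rw [lam11, S_high k (k + 1 + q) (by omega), c2]
    have hc : ((2 * k - (k + 1 + q) : ℕ) : ℝ) = (k : ℝ) - 1 - q := by
      have h' : 2 * k - (k + 1 + q) = k - (1 + q) := by omega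
      rw [h', Nat.cast_sub (by omega)]
      push_cast
      ring
    rw [hc]
    ring
  rw [e1, e2, sq_sum, sq_sum, Nat.cast_sub hk]
  push_cast
  field_simp
  ring

theorem stmt_12 (k : ℕ) (hk : 1 ≤ k) :
    ((k : ℝ) ^ 3 * ∑ m ∈ Finset.Icc 1 (2 * k - 1), (lam11 k m) ^ 2
        = 3 - 9 / (2 * (k : ℝ)) + 15 / (4 * (k : ℝ) ^ 2)) ∧
    Tendsto (fun n : ℕ => (n : ℝ) ^ 3 * ∑ m ∈ Finset.Icc 1 (2 * n - 1), (lam11 n m) ^ 2)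
      atTop (nhds 3) := by
  refine ⟨exact_part k hk, ?_⟩
  have hEq : (fun n : ℕ => 3 - 9 / (2 * (n : ℝ)) + 15 / (4 * (n : ℝ) ^ 2))
      =ᶠ[atTop] (fun n : ℕ => (n : ℝ) ^ 3 * ∑ m ∈ Finset.Icc 1 (2 * n - 1), (lam11 n m) ^ 2) :=
    eventually_atTop.2 ⟨1, fun n hn => (exact_part n hn).symm⟩
  refine Tendsto.congr' hEq ?_
  have h0 : Tendsto (fun n : ℕ => 1 / (n : ℝ)) atTop (nhds 0) :=
    tendsto_one_div_atTop_nhds_zero_nat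
  have h1 : Tendsto (fun n : ℕ => (9/2) * (1 / (n : ℝ))) atTop (nhds 0) := by
    simpa using h0.const_mul (9/2 : ℝ)
  have h2 : Tendsto (fun n : ℕ => (15/4) * (1 / (n : ℝ)) ^ 2) atTop (nhds 0) := by
    simpa using (h0.pow 2).const_mul (15/4 : ℝ)
  have hAll : Tendsto (fun n : ℕ => 3 - (9/2) * (1 / (n : ℝ)) + (15/4) * (1 / (n : ℝ)) ^ 2)
      atTop (nhds 3) := by
    simpa using (tendsto_const_nhds.sub h1).add h2
  refine hAll.congr fun n => ?_
  have ha : 9 / (2 * (n : ℝ)) = (9/2) * (1 / (n : ℝ)) := by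
    rw [mul_one_div, div_div]
  have hb : 15 / (4 * (n : ℝ) ^ 2) = (15/4) * (1 / (n : ℝ)) ^ 2 := by
    rw [div_pow, one_pow, mul_one_div, div_div]
  rw [ha, hb]
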